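/- arXiv:2107.12636 — 2 statements merged into one kernel-verified Lean document; each statement's English description precedes it below -/
import Mathlib

section
/- Let S and T be distributions over X with a common labeling function f, H a hypothesis class, h* ∈ H a minimizer of R_S(h) + R_T(h) with value λ, and d_{HΔH}(S,T) the HΔH-divergence. Then for every h ∈ H, R_T(h) ≤ R_S(h) + (1/2) d_{HΔH}(S,T) + λ. -/
open MeasureTheory

/-- The 0–1 risk of `h` on domain `D` with respect to the labeling function `f`. -/
noncomputable def err {X : Type*} [MeasurableSpace X]
    (D : Measure X) (f h : X → Bool) : ℝ :=
  (D {x | h x ≠ f x}).toReal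

/-- The `HΔH`-divergence
`d_{HΔH}(S,T) = 2 sup_{h,h' ∈ H} |Pr_S[h ≠ h'] − Pr_T[h ≠ h']|`. -/
noncomputable def dHdH {X : Type*} [MeasurableSpace X]
    (S T : Measure X) (H : Set (X → Bool)) : ℝ :=
  2 * sSup {r : ℝ | ∃ h ∈ H, ∃ h' ∈ H,
    r = |(S {x | h x ≠ h' x}).toReal - (T {x | h x ≠ h' x}).toReal|}

/-- Triangle inequality for 0–1 disagreement probabilities. -/
lemma tri_aux {X : Type*} [MeasurableSpace X] (μ : Measure X)
    [IsProbabilityMeasure μ] (a b c : X → Bool) :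
    (μ {x | a x ≠ c x}).toReal ≤
      (μ {x | a x ≠ b x}).toReal + (μ {x | b x ≠ c x}).toReal := by
  have hsub : {x | a x ≠ c x} ⊆ {x | a x ≠ b x} ∪ {x | b x ≠ c x} := by
    intro x hx
    by_cases h : a x = b x
    · right; simp only [Set.mem_setOf_eq]; intro h'; exact hx (h.trans h')
    · left; exact h
  have h1 : μ {x | a x ≠ c x} ≤ μ {x | a x ≠ b x} + μ {x | b x ≠ c x} :=
    (measure_mono hsub).trans (measure_union_le _ _)
  have hb : μ {x | a x ≠ b x} ≠ ⊤ := measure_ne_top μ _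
  have hc : μ {x | b x ≠ c x} ≠ ⊤ := measure_ne_top μ _
  calc (μ {x | a x ≠ c x}).toReal
      ≤ (μ {x | a x ≠ b x} + μ {x | b x ≠ c x}).toReal :=
        ENNReal.toReal_mono (by finiteness) h1
    _ = _ := ENNReal.toReal_add hb hc

/-- The Ben-David et al. domain adaptation bound: for every `h ∈ H`,
`R_T(h) ≤ R_S(h) + ½ d_{HΔH}(S,T) + λ`, where `λ = R_S(h*) + R_T(h*)` is attained by a
minimizer `h* ∈ H` of `R_S + R_T`. -/
theorem stmt11 {X : Type*} [MeasurableSpace X] (S T : Measure X)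
    [IsProbabilityMeasure S] [IsProbabilityMeasure T]
    (H : Set (X → Bool)) (hH : ∀ h ∈ H, Measurable h)
    (f : X → Bool) (hf : Measurable f)
    (hstar : X → Bool) (hmem : hstar ∈ H)
    (hmin : ∀ h ∈ H, err S f hstar + err T f hstar ≤ err S f h + err T f h)
    (lam : ℝ) (hlam : lam = err S f hstar + err T f hstar) :
    ∀ h ∈ H, err T f h ≤ err S f h + (1 / 2) * dHdH S T H + lam := by
  intro h hh
  set A := {r : ℝ | ∃ h ∈ H, ∃ h' ∈ H,
    r = |(S {x | h x ≠ h' x}).toReal - (T {x | h x ≠ h' x}).toReal|}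
  have hbdd : BddAbove A := by
    refine ⟨1, ?_⟩
    rintro r ⟨g, -, g', -, rfl⟩
    have hs : (S {x | g x ≠ g' x}).toReal ≤ 1 := by
      have := prob_le_one (μ := S) (s := {x | g x ≠ g' x})
      simpa using ENNReal.toReal_mono (by simp) this
    have ht : (T {x | g x ≠ g' x}).toReal ≤ 1 := by
      have := prob_le_one (μ := T) (s := {x | g x ≠ g' x})
      simpa using ENNReal.toReal_mono (by simp) this
    have hs0 : (0:ℝ) ≤ (S {x | g x ≠ g' x}).toReal := ENNReal.toReal_nonneg
    have ht0 : (0:ℝ) ≤ (T {x | g x ≠ g' x}).toReal := ENNReal.toReal_nonneg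
    rw [abs_sub_le_iff]; constructor <;> linarith
  have hdisc : |(S {x | h x ≠ hstar x}).toReal - (T {x | h x ≠ hstar x}).toReal| ≤ sSup A :=
    le_csSup hbdd ⟨h, hh, hstar, hmem, rfl⟩
  have key : (T {x | h x ≠ hstar x}).toReal ≤ (S {x | h x ≠ hstar x}).toReal + sSup A := by
    have h2 := (abs_sub_le_iff.mp hdisc).2
    linarith
  have t1 : err T f h ≤ (T {x | h x ≠ hstar x}).toReal + err T f hstar :=
    tri_aux T h hstar f
  have t2 : (S {x | h x ≠ hstar x}).toReal ≤ err S f h + err S f hstar := by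
    have := tri_aux S h f hstar
    have hset : {x | f x ≠ hstar x} = {x | hstar x ≠ f x} := by
      ext x; exact ne_comm
    rw [hset] at this
    exact this
  have hd : (1 / 2) * dHdH S T H = sSup A := by
    unfold dHdH; ring
  rw [hd, hlam]
  linarith
end

section
/- Let L ≥ 1 and c₁, …, c_L, ε > 0. If per-layer log covering numbers satisfy log Nᵢ ≤ cᵢ/εᵢ² for tolerances εᵢ > 0 with ∑ᵢ εᵢ ≤ ε, then choosing εᵢ proportional to cᵢ^{1/3}, i.e., εᵢ = ε cᵢ^{1/3} / ∑ⱼ cⱼ^{1/3}, gives ∑ᵢ log Nᵢ ≤ (1/ε²) (∑_{i=1}^{L} cᵢ^{1/3})³. -/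
/-- Optimal tolerance allocation: if per-layer log covering numbers satisfy
`log Nᵢ ≤ cᵢ / εᵢ²` with `εᵢ = ε cᵢ^{1/3} / ∑ⱼ cⱼ^{1/3}` (so that `∑ᵢ εᵢ ≤ ε`), then
`∑ᵢ log Nᵢ ≤ (1/ε²) (∑ᵢ cᵢ^{1/3})³`. -/
theorem stmt18 (L : ℕ) (hL : 1 ≤ L) (c : ℕ → ℝ) (hc : ∀ i, 0 < c i)
    (ε : ℝ) (hε : 0 < ε) (logN eps : ℕ → ℝ)
    (heps : ∀ i, eps i = ε * c i ^ ((1 : ℝ) / 3) / ∑ j ∈ Finset.Icc 1 L, c j ^ ((1 : ℝ) / 3))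
    (hepspos : ∀ i ∈ Finset.Icc 1 L, 0 < eps i)
    (hsum : ∑ i ∈ Finset.Icc 1 L, eps i ≤ ε)
    (hN : ∀ i ∈ Finset.Icc 1 L, logN i ≤ c i / (eps i) ^ 2) :
    ∑ i ∈ Finset.Icc 1 L, logN i ≤
      (1 / ε ^ 2) * (∑ i ∈ Finset.Icc 1 L, c i ^ ((1 : ℝ) / 3)) ^ 3 := by
  set S := ∑ j ∈ Finset.Icc 1 L, c j ^ ((1 : ℝ) / 3) with hSdef
  have hne : (Finset.Icc 1 L).Nonempty := ⟨1, by simp [hL]⟩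
  have hS : 0 < S := Finset.sum_pos (fun i _ => Real.rpow_pos_of_pos (hc i) _) hne
  have key : ∀ i ∈ Finset.Icc 1 L, c i / eps i ^ 2 = c i ^ ((1:ℝ)/3) * S ^ 2 / ε ^ 2 := by
    intro i _
    have hci := hc i
    have hpow : 0 < c i ^ ((1:ℝ)/3) := Real.rpow_pos_of_pos hci _
    have h1 : c i ^ ((1:ℝ)/3) * (c i ^ ((1:ℝ)/3))^2 = c i := by
      rw [← Real.rpow_natCast (c i ^ ((1:ℝ)/3)) 2, ← Real.rpow_mul hci.le,
        ← Real.rpow_add hci]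
      norm_num
    rw [heps i]
    field_simp
    linear_combination -h1
  calc ∑ i ∈ Finset.Icc 1 L, logN i ≤ ∑ i ∈ Finset.Icc 1 L, c i / eps i ^ 2 :=
        Finset.sum_le_sum hN
    _ = ∑ i ∈ Finset.Icc 1 L, c i ^ ((1:ℝ)/3) * S ^ 2 / ε ^ 2 := Finset.sum_congr rfl key
    _ = (1 / ε ^ 2) * S ^ 3 := by
        rw [← Finset.sum_div, ← Finset.sum_mul, ← hSdef]; ring
end
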